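/- (Intermediate-regime minimizer.) Let λ = √(2/(3π)) and let ρ*(x) = 3π·max(λ − x, 0) for x > 0. Then for every measurable, nonnegative, square-integrable ρ : (0,∞) → ℝ with ∫₀^∞ ρ(x) dx = 1, one has (1/(6π))·∫₀^∞ ρ(x)² dx + ∫₀^∞ x·ρ(x) dx ≥ (1/(6π))·∫₀^∞ ρ*(x)² dx + ∫₀^∞ x·ρ*(x) dx, with equality if and only if ρ = ρ* almost everywhere. In particular the equilibrium density in the intermediate regime is linear on its support. -/

import Mathlib

open Real MeasureTheory
open scoped ENNReal NNReal

/-- `λ = √(2/(3π))`, the pile-up length of the intermediate-regime minimizer. -/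
noncomputable def lam : ℝ := Real.sqrt (2 / (3 * Real.pi))

/-- The intermediate-regime equilibrium density `ρ*(x) = 3π·max(λ − x, 0)`. -/
noncomputable def rhoStar (x : ℝ) : ℝ := 3 * Real.pi * max (lam - x) 0

lemma lam_pos : 0 < lam := Real.sqrt_pos.mpr (by positivity)

lemma lam_sq : lam ^ 2 = 2 / (3 * Real.pi) := Real.sq_sqrt (by positivity)

lemma rhoStar_nonneg (x : ℝ) : 0 ≤ rhoStar x :=
  mul_nonneg (by positivity) (le_max_right _ _)

lemma rhoStar_cont : Continuous rhoStar :=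
  continuous_const.mul ((continuous_const.sub continuous_id).max continuous_const)

lemma rhoStar_zero {x : ℝ} (hx : lam ≤ x) : rhoStar x = 0 := by
  unfold rhoStar; rw [max_eq_right (by linarith)]; ring

lemma integrableOn_vanish {f : ℝ → ℝ} (hc : Continuous f)
    (hv : ∀ x, lam ≤ x → f x = 0) : IntegrableOn f (Set.Ioi 0) := by
  have hsplit : Set.Ioi (0:ℝ) = Set.Ioc 0 lam ∪ Set.Ioi lam :=
    (Set.Ioc_union_Ioi_eq_Ioi lam_pos.le).symm
  rw [hsplit]
  exact (hc.integrableOn_Ioc).union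
    ((integrableOn_zero (ε' := ℝ)).congr_fun
      (fun x hx => (hv x (le_of_lt hx)).symm) measurableSet_Ioi)

lemma rhoStar_mass : (∫ x in Set.Ioi (0:ℝ), rhoStar x) = 1 := by
  have hsplit : Set.Ioi (0:ℝ) = Set.Ioc 0 lam ∪ Set.Ioi lam :=
    (Set.Ioc_union_Ioi_eq_Ioi lam_pos.le).symm
  have h1 : IntegrableOn rhoStar (Set.Ioc 0 lam) := rhoStar_cont.integrableOn_Ioc
  have h2 : IntegrableOn rhoStar (Set.Ioi lam) :=
    (integrableOn_zero (ε' := ℝ)).congr_fun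
      (fun x hx => (rhoStar_zero (le_of_lt hx)).symm) measurableSet_Ioi
  rw [hsplit, setIntegral_union (Set.Ioc_disjoint_Ioi le_rfl) measurableSet_Ioi h1 h2]
  have hz : (∫ x in Set.Ioi lam, rhoStar x) = 0 := by
    rw [setIntegral_congr_fun measurableSet_Ioi
      (fun x hx => rhoStar_zero (le_of_lt hx))]
    simp
  have hval : (∫ x in Set.Ioc (0:ℝ) lam, rhoStar x) = 1 := by
    rw [setIntegral_congr_fun measurableSet_Ioc
      (fun x hx => show rhoStar x = 3*Real.pi*(lam - x) by
        unfold rhoStar; rw [max_eq_left (by linarith [hx.2])])]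
    rw [← intervalIntegral.integral_of_le lam_pos.le]
    have : (∫ x in (0:ℝ)..lam, 3*Real.pi*(lam - x))
        = 3*Real.pi*(lam*lam - lam^2/2) := by
      rw [intervalIntegral.integral_const_mul,
        intervalIntegral.integral_sub intervalIntegrable_const
          intervalIntegral.intervalIntegrable_id,
        intervalIntegral.integral_const, integral_id]
      simp
      try ring
    rw [this]
    have hπ := Real.pi_pos
    have := lam_sq
    field_simp at this ⊢
    nlinarith
  rw [hz, hval]; ring

lemma key (x r : ℝ) (hx : 0 < x) (hr : 0 ≤ r) :
    1/(6*Real.pi) * rhoStar x ^2 + x * rhoStar x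
      + 1/(6*Real.pi)*(r - rhoStar x)^2 + lam*(r - rhoStar x)
      ≤ 1/(6*Real.pi)*r^2 + x*r := by
  have hπ := Real.pi_pos
  unfold rhoStar
  rcases le_total lam x with h | h
  · rw [max_eq_right (by linarith)]
    have h1 : 1/(6*Real.pi) * (3*Real.pi*0) ^2 + x * (3*Real.pi*0)
      + 1/(6*Real.pi)*(r - 3*Real.pi*0)^2 + lam*(r - 3*Real.pi*0)
      = 1/(6*Real.pi)*r^2 + lam*r := by ring
    rw [h1]
    nlinarith [mul_nonneg (sub_nonneg.mpr h) hr]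
  · rw [max_eq_left (by linarith)]
    have : (1:ℝ)/(6*Real.pi) * (3*Real.pi*(lam-x)) ^2 + x * (3*Real.pi*(lam-x))
      + 1/(6*Real.pi)*(r - 3*Real.pi*(lam-x))^2 + lam*(r - 3*Real.pi*(lam-x))
      = 1/(6*Real.pi)*r^2 + x*r := by
      field_simp
      ring
    rw [this]

set_option maxHeartbeats 1000000 in
/-- (Intermediate-regime minimizer.) Among all measurable, nonnegative, square-integrable
densities `ρ` on `(0,∞)` of unit mass, the energy
`E⁽³⁾(ρ) = (1/(6π))·∫₀^∞ ρ² + ∫₀^∞ x·ρ(x) dx` (computed in `[0,∞]`, so that a divergent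
transport term counts as `+∞`) is minimized by `ρ*`, uniquely up to null sets. In
particular the equilibrium density in the intermediate regime is linear on its support. -/
theorem stmt15 (ρ : ℝ → ℝ) (hmeas : Measurable ρ)
    (hnn : ∀ x ∈ Set.Ioi (0 : ℝ), 0 ≤ ρ x)
    (hL2 : IntegrableOn (fun x => ρ x ^ 2) (Set.Ioi 0))
    (hmass : (∫ x in Set.Ioi (0 : ℝ), ρ x) = 1) :
    (ENNReal.ofReal (1 / (6 * Real.pi)) *
        (∫⁻ x in Set.Ioi (0 : ℝ), ENNReal.ofReal (rhoStar x ^ 2)) +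
        ∫⁻ x in Set.Ioi (0 : ℝ), ENNReal.ofReal (x * rhoStar x))
      ≤ ENNReal.ofReal (1 / (6 * Real.pi)) *
        (∫⁻ x in Set.Ioi (0 : ℝ), ENNReal.ofReal (ρ x ^ 2)) +
        ∫⁻ x in Set.Ioi (0 : ℝ), ENNReal.ofReal (x * ρ x) ∧
    ((ENNReal.ofReal (1 / (6 * Real.pi)) *
        (∫⁻ x in Set.Ioi (0 : ℝ), ENNReal.ofReal (rhoStar x ^ 2)) +
        ∫⁻ x in Set.Ioi (0 : ℝ), ENNReal.ofReal (x * rhoStar x))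
      = ENNReal.ofReal (1 / (6 * Real.pi)) *
        (∫⁻ x in Set.Ioi (0 : ℝ), ENNReal.ofReal (ρ x ^ 2)) +
        ∫⁻ x in Set.Ioi (0 : ℝ), ENNReal.ofReal (x * ρ x)
      ↔ ρ =ᵐ[volume.restrict (Set.Ioi 0)] rhoStar) := by
  have hπ := Real.pi_pos
  have hcpos : (0:ℝ) < 1 / (6 * Real.pi) := by positivity
  have hc : (0:ℝ) ≤ 1 / (6 * Real.pi) := hcpos.le
  have hint1 : IntegrableOn (fun x => rhoStar x ^ 2) (Set.Ioi 0) :=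
    integrableOn_vanish (rhoStar_cont.pow 2)
      (fun x hx => by rw [rhoStar_zero hx]; ring)
  have hint2 : IntegrableOn (fun x => x * rhoStar x) (Set.Ioi 0) :=
    integrableOn_vanish (continuous_id.mul rhoStar_cont)
      (fun x hx => by rw [rhoStar_zero hx]; ring)
  have hint3 : IntegrableOn rhoStar (Set.Ioi 0) :=
    integrableOn_vanish rhoStar_cont (fun x hx => rhoStar_zero hx)
  have hρint : IntegrableOn ρ (Set.Ioi 0) := by
    by_contra h
    rw [integral_undef h] at hmass; exact one_ne_zero hmass.symm
  have hae : ∀ {f : ℝ → ℝ}, (∀ x ∈ Set.Ioi (0:ℝ), 0 ≤ f x) →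
      0 ≤ᵐ[volume.restrict (Set.Ioi 0)] f :=
    fun h => (ae_restrict_iff' measurableSet_Ioi).mpr (ae_of_all _ h)
  have hnn1 : (0:ℝ) ≤ ∫ x in Set.Ioi (0:ℝ), rhoStar x ^ 2 :=
    setIntegral_nonneg measurableSet_Ioi (fun x _ => sq_nonneg _)
  have hnn2 : (0:ℝ) ≤ ∫ x in Set.Ioi (0:ℝ), x * rhoStar x :=
    setIntegral_nonneg measurableSet_Ioi
      (fun x hx => mul_nonneg (le_of_lt hx) (rhoStar_nonneg x))
  have hnn3 : (0:ℝ) ≤ ∫ x in Set.Ioi (0:ℝ), ρ x ^ 2 :=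
    setIntegral_nonneg measurableSet_Ioi (fun x _ => sq_nonneg _)
  have hnn4 : (0:ℝ) ≤ ∫ x in Set.Ioi (0:ℝ), x * ρ x :=
    setIntegral_nonneg measurableSet_Ioi
      (fun x hx => mul_nonneg (le_of_lt hx) (hnn x hx))
  have L1 : (∫⁻ x in Set.Ioi (0:ℝ), ENNReal.ofReal (rhoStar x ^ 2))
      = ENNReal.ofReal (∫ x in Set.Ioi (0:ℝ), rhoStar x ^ 2) :=
    (ofReal_integral_eq_lintegral_ofReal hint1
      (hae fun x _ => sq_nonneg _)).symm
  have L2 : (∫⁻ x in Set.Ioi (0:ℝ), ENNReal.ofReal (x * rhoStar x))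
      = ENNReal.ofReal (∫ x in Set.Ioi (0:ℝ), x * rhoStar x) :=
    (ofReal_integral_eq_lintegral_ofReal hint2
      (hae fun x hx => mul_nonneg (le_of_lt hx) (rhoStar_nonneg x))).symm
  have L3 : (∫⁻ x in Set.Ioi (0:ℝ), ENNReal.ofReal (ρ x ^ 2))
      = ENNReal.ofReal (∫ x in Set.Ioi (0:ℝ), ρ x ^ 2) :=
    (ofReal_integral_eq_lintegral_ofReal hL2
      (hae fun x _ => sq_nonneg _)).symm
  rw [L1, L2, L3]
  by_cases hT : (∫⁻ x in Set.Ioi (0:ℝ), ENNReal.ofReal (x * ρ x)) = ⊤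
  · rw [hT]
    have hLne : ENNReal.ofReal (1 / (6 * Real.pi)) *
        ENNReal.ofReal (∫ x in Set.Ioi (0:ℝ), rhoStar x ^ 2) +
        ENNReal.ofReal (∫ x in Set.Ioi (0:ℝ), x * rhoStar x) ≠ ⊤ :=
      ENNReal.add_ne_top.mpr
        ⟨ENNReal.mul_ne_top ENNReal.ofReal_ne_top ENNReal.ofReal_ne_top,
          ENNReal.ofReal_ne_top⟩
    have hRtop : ENNReal.ofReal (1 / (6 * Real.pi)) *
        ENNReal.ofReal (∫ x in Set.Ioi (0:ℝ), ρ x ^ 2) + (⊤ : ℝ≥0∞) = ⊤ :=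
      add_top _
    rw [hRtop]
    refine ⟨le_top, ?_, ?_⟩
    · intro heq; exact absurd heq hLne
    · intro hcg
      exfalso
      have hcongr : (fun x => ENNReal.ofReal (x * ρ x))
          =ᵐ[volume.restrict (Set.Ioi 0)] fun x => ENNReal.ofReal (x * rhoStar x) :=
        hcg.mono fun x hx => by dsimp only; rw [hx]
      rw [lintegral_congr_ae hcongr, L2] at hT
      exact ENNReal.ofReal_ne_top hT
  · have hxρint : IntegrableOn (fun x => x * ρ x) (Set.Ioi 0) := by
      refine ⟨(measurable_id.mul hmeas).aestronglyMeasurable, ?_⟩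
      show (∫⁻ x in Set.Ioi (0:ℝ), (‖x * ρ x‖₊ : ℝ≥0∞)) < ⊤
      have hco : (fun x => (‖x * ρ x‖₊ : ℝ≥0∞))
          =ᵐ[volume.restrict (Set.Ioi 0)] fun x => ENNReal.ofReal (x * ρ x) := by
        refine (ae_restrict_iff' measurableSet_Ioi).mpr (ae_of_all _ fun x hx => ?_)
        exact Real.enorm_eq_ofReal (mul_nonneg (le_of_lt hx) (hnn x hx))
      rw [lintegral_congr_ae hco]
      exact lt_top_iff_ne_top.mpr hT
    have L4 : (∫⁻ x in Set.Ioi (0:ℝ), ENNReal.ofReal (x * ρ x))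
        = ENNReal.ofReal (∫ x in Set.Ioi (0:ℝ), x * ρ x) :=
      (ofReal_integral_eq_lintegral_ofReal hxρint
        (hae fun x hx => mul_nonneg (le_of_lt hx) (hnn x hx))).symm
    rw [L4, ← ENNReal.ofReal_mul hc, ← ENNReal.ofReal_mul hc,
      ← ENNReal.ofReal_add (mul_nonneg hc hnn1) hnn2,
      ← ENNReal.ofReal_add (mul_nonneg hc hnn3) hnn4]
    have hdint : IntegrableOn (fun x => (ρ x - rhoStar x) ^ 2) (Set.Ioi 0) := by
      refine Integrable.mono' ((hL2.const_mul 2).add (hint1.const_mul 2))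
        ((hmeas.sub rhoStar_cont.measurable).pow_const 2).aestronglyMeasurable
        (ae_of_all _ fun x => ?_)
      simp only [Pi.add_apply, Real.norm_eq_abs,
        abs_of_nonneg (sq_nonneg (ρ x - rhoStar x))]
      nlinarith [sq_nonneg (ρ x + rhoStar x)]
    have hA : IntegrableOn (fun x =>
        1/(6*Real.pi) * rhoStar x ^2 + x * rhoStar x
          + 1/(6*Real.pi)*(ρ x - rhoStar x)^2 + lam*(ρ x - rhoStar x)) (Set.Ioi 0) :=
      (((hint1.const_mul _).add hint2).add (hdint.const_mul _)).add
        ((hρint.sub hint3).const_mul _)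
    have hB : IntegrableOn (fun x => 1/(6*Real.pi)*(ρ x)^2 + x*(ρ x)) (Set.Ioi 0) :=
      (hL2.const_mul _).add hxρint
    have hmono : (∫ x in Set.Ioi (0:ℝ),
        (1/(6*Real.pi) * rhoStar x ^2 + x * rhoStar x
          + 1/(6*Real.pi)*(ρ x - rhoStar x)^2 + lam*(ρ x - rhoStar x)))
        ≤ ∫ x in Set.Ioi (0:ℝ), (1/(6*Real.pi)*(ρ x)^2 + x*(ρ x)) :=
      setIntegral_mono_on hA hB measurableSet_Ioi
        (fun x hx => key x (ρ x) hx (hnn x hx))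
    have e1 : (∫ x in Set.Ioi (0:ℝ),
        (1/(6*Real.pi) * rhoStar x ^2 + x * rhoStar x
          + 1/(6*Real.pi)*(ρ x - rhoStar x)^2 + lam*(ρ x - rhoStar x)))
        = (∫ x in Set.Ioi (0:ℝ), (1/(6*Real.pi) * rhoStar x ^2 + x * rhoStar x
            + 1/(6*Real.pi)*(ρ x - rhoStar x)^2))
          + ∫ x in Set.Ioi (0:ℝ), lam*(ρ x - rhoStar x) :=
      integral_add (((hint1.const_mul _).add hint2).add (hdint.const_mul _))
        ((hρint.sub hint3).const_mul _)
    have e2 : (∫ x in Set.Ioi (0:ℝ), (1/(6*Real.pi) * rhoStar x ^2 + x * rhoStar x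
            + 1/(6*Real.pi)*(ρ x - rhoStar x)^2))
        = (∫ x in Set.Ioi (0:ℝ), (1/(6*Real.pi) * rhoStar x ^2 + x * rhoStar x))
          + ∫ x in Set.Ioi (0:ℝ), 1/(6*Real.pi)*(ρ x - rhoStar x)^2 :=
      integral_add ((hint1.const_mul _).add hint2) (hdint.const_mul _)
    have e3 : (∫ x in Set.Ioi (0:ℝ), (1/(6*Real.pi) * rhoStar x ^2 + x * rhoStar x))
        = (∫ x in Set.Ioi (0:ℝ), 1/(6*Real.pi) * rhoStar x ^2)
          + ∫ x in Set.Ioi (0:ℝ), x * rhoStar x :=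
      integral_add (hint1.const_mul _) hint2
    have e4 : (∫ x in Set.Ioi (0:ℝ), 1/(6*Real.pi) * rhoStar x ^2)
        = 1/(6*Real.pi) * ∫ x in Set.Ioi (0:ℝ), rhoStar x ^2 :=
      integral_const_mul _ _
    have e5 : (∫ x in Set.Ioi (0:ℝ), 1/(6*Real.pi)*(ρ x - rhoStar x)^2)
        = 1/(6*Real.pi) * ∫ x in Set.Ioi (0:ℝ), (ρ x - rhoStar x)^2 :=
      integral_const_mul _ _
    have e6 : (∫ x in Set.Ioi (0:ℝ), lam*(ρ x - rhoStar x))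
        = lam * ∫ x in Set.Ioi (0:ℝ), (ρ x - rhoStar x) :=
      integral_const_mul _ _
    have e7 : (∫ x in Set.Ioi (0:ℝ), (ρ x - rhoStar x))
        = (∫ x in Set.Ioi (0:ℝ), ρ x) - ∫ x in Set.Ioi (0:ℝ), rhoStar x :=
      integral_sub hρint hint3
    have hsplitA : (∫ x in Set.Ioi (0:ℝ),
        (1/(6*Real.pi) * rhoStar x ^2 + x * rhoStar x
          + 1/(6*Real.pi)*(ρ x - rhoStar x)^2 + lam*(ρ x - rhoStar x)))
        = (1/(6*Real.pi) * ∫ x in Set.Ioi (0:ℝ), rhoStar x ^2)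
          + (∫ x in Set.Ioi (0:ℝ), x * rhoStar x)
          + (1/(6*Real.pi)) * (∫ x in Set.Ioi (0:ℝ), (ρ x - rhoStar x)^2)
          + lam * ((∫ x in Set.Ioi (0:ℝ), ρ x) - ∫ x in Set.Ioi (0:ℝ), rhoStar x) := by
      rw [e1, e2, e3, e4, e5, e6, e7]
    have b1 : (∫ x in Set.Ioi (0:ℝ), (1/(6*Real.pi)*(ρ x)^2 + x*(ρ x)))
        = (∫ x in Set.Ioi (0:ℝ), 1/(6*Real.pi)*(ρ x)^2)
          + ∫ x in Set.Ioi (0:ℝ), x * ρ x :=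
      integral_add (hL2.const_mul _) hxρint
    have b2 : (∫ x in Set.Ioi (0:ℝ), 1/(6*Real.pi)*(ρ x)^2)
        = 1/(6*Real.pi) * ∫ x in Set.Ioi (0:ℝ), (ρ x)^2 :=
      integral_const_mul _ _
    have hsplitB : (∫ x in Set.Ioi (0:ℝ), (1/(6*Real.pi)*(ρ x)^2 + x*(ρ x)))
        = 1/(6*Real.pi) * (∫ x in Set.Ioi (0:ℝ), (ρ x)^2)
          + ∫ x in Set.Ioi (0:ℝ), x * ρ x := by
      rw [b1, b2]
    rw [hsplitA, hsplitB, hmass, rhoStar_mass, sub_self, mul_zero, add_zero] at hmono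
    have hsq0 : (0:ℝ) ≤ ∫ x in Set.Ioi (0:ℝ), (ρ x - rhoStar x)^2 :=
      setIntegral_nonneg measurableSet_Ioi (fun x _ => sq_nonneg _)
    constructor
    · exact ENNReal.ofReal_le_ofReal (by linarith [mul_nonneg hc hsq0])
    · constructor
      · intro heq
        have hEq : 1 / (6 * Real.pi) * (∫ x in Set.Ioi (0:ℝ), rhoStar x ^ 2)
            + (∫ x in Set.Ioi (0:ℝ), x * rhoStar x)
            = 1 / (6 * Real.pi) * (∫ x in Set.Ioi (0:ℝ), ρ x ^ 2)
            + ∫ x in Set.Ioi (0:ℝ), x * ρ x :=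
          (ENNReal.ofReal_eq_ofReal_iff (by positivity) (by positivity)).mp heq
        have hcd : 1/(6*Real.pi) * (∫ x in Set.Ioi (0:ℝ), (ρ x - rhoStar x)^2)
            ≤ 1/(6*Real.pi) * 0 := by rw [mul_zero]; linarith
        have hz : (∫ x in Set.Ioi (0:ℝ), (ρ x - rhoStar x)^2) = 0 :=
          le_antisymm (le_of_mul_le_mul_left hcd hcpos) hsq0
        have hz' := (integral_eq_zero_iff_of_nonneg_ae
          (hae fun x _ => sq_nonneg _) hdint).mp hz
        filter_upwards [hz'] with x hx
        have hx0 : (ρ x - rhoStar x) ^ 2 = 0 := hx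
        exact sub_eq_zero.mp (pow_eq_zero_iff two_ne_zero |>.mp hx0)
      · intro hcg
        have h1 : (∫ x in Set.Ioi (0:ℝ), ρ x ^ 2)
            = ∫ x in Set.Ioi (0:ℝ), rhoStar x ^ 2 :=
          integral_congr_ae (hcg.mono fun x hx => by dsimp only; rw [hx])
        have h2 : (∫ x in Set.Ioi (0:ℝ), x * ρ x)
            = ∫ x in Set.Ioi (0:ℝ), x * rhoStar x :=
          integral_congr_ae (hcg.mono fun x hx => by dsimp only; rw [hx])
        rw [h1, h2]
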